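/- Let x be normal and let 𝒜 be a trim group automaton accepting L whose run on x visits final states infinitely often. Then the non-oblivious selection x ⊓ L is an infinite sequence, and moreover the set of selected indices has positive lower density: liminf_{n→∞} #{i ≤ n : x_1⋯x_i ∈ L}/n > 0. -/

import Mathlib

open Filter Topology

def pref {A : Type*} (x : ℕ → A) (n : ℕ) : List A := (List.range n).map x

/-- Number of occurrences of `u` in `w` (as a factor). -/
noncomputable def occ {A : Type*} (w u : List A) : ℕ :=
  {i : ℕ | i + u.length ≤ w.length ∧ (w.drop i).take u.length = u}.ncard

/-- A sequence `x ∈ A^ℕ` is normal if every finite word occurs in its prefixes with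
limiting frequency `(#A)^{-|w|}`. -/
def IsNormal {A : Type*} [Fintype A] (x : ℕ → A) : Prop :=
  ∀ w : List A,
    Tendsto (fun n => (occ (pref x n) w : ℝ) / n) atTop
      (nhds (((Fintype.card A : ℝ) ^ w.length)⁻¹))

namespace SelAux
set_option linter.unusedSectionVars false
open scoped Classical

variable {A Q : Type*} [Fintype A] [Fintype Q]

/-- The factor `x_i x_{i+1} ⋯ x_{i+m-1}`. -/
def word (x : ℕ → A) (i m : ℕ) : List A := (List.range m).map fun t => x (i + t)

lemma word_length (x : ℕ → A) (i m : ℕ) : (word x i m).length = m := by simp [word]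

lemma pref_eq_word (x : ℕ → A) (n : ℕ) : pref x n = word x 0 n := by simp [pref, word]

lemma word_append (x : ℕ → A) (i a b : ℕ) :
    word x i (a + b) = word x i a ++ word x (i + a) b := by
  simp [word, List.range_add, List.map_map, Function.comp_def, add_assoc]

lemma word_take (x : ℕ → A) (i m j : ℕ) (h : j ≤ m) :
    (word x i m).take j = word x i j := by
  simp [word, ← List.map_take, List.take_range, Nat.min_eq_left h]

lemma evalFrom_append (M : DFA A Q) (q : Q) (u v : List A) :
    M.evalFrom q (u ++ v) = M.evalFrom (M.evalFrom q u) v := by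
  simp [DFA.evalFrom, List.foldl_append]

lemma state_add (M : DFA A Q) (x : ℕ → A) (i j : ℕ) :
    M.evalFrom M.start (pref x (i + j))
      = M.evalFrom (M.evalFrom M.start (pref x i)) (word x i j) := by
  rw [pref_eq_word, pref_eq_word x i, word_append, evalFrom_append]
  simp

lemma pref_drop_take (x : ℕ → A) (n i ℓ : ℕ) (h : i + ℓ ≤ n) :
    ((pref x n).drop i).take ℓ = word x i ℓ := by
  have h0 : i + (n - i) = n := by omega
  have h1 := word_append x 0 i (n - i)
  rw [h0, Nat.zero_add] at h1
  have h2 : (word x 0 i).length = i := word_length ..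
  rw [pref_eq_word, h1, List.drop_left' h2, word_take]
  omega

/-- All words of a given length, as a finset. -/
noncomputable def allWords (A : Type*) [Fintype A] (m : ℕ) : Finset (List A) :=
  (Finset.univ : Finset (Fin m → A)).image List.ofFn

lemma mem_allWords {m : ℕ} {u : List A} : u ∈ allWords A m ↔ u.length = m := by
  constructor
  · intro h
    simp only [allWords, Finset.mem_image] at h
    obtain ⟨f, -, rfl⟩ := h
    simp
  · intro h
    subst h
    rw [allWords, Finset.mem_image]
    exact ⟨u.get, Finset.mem_univ _, List.ofFn_get u⟩

lemma card_allWords (m : ℕ) : (allWords A m).card = Fintype.card A ^ m := by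
  rw [allWords, Finset.card_image_of_injective _ List.ofFn_injective]
  simp

open scoped Classical in
/-- Words of length `m` whose run from `q` never meets the accepting set (at positive times). -/
noncomputable def avoidF (M : DFA A Q) (q : Q) (m : ℕ) : Finset (List A) :=
  (allWords A m).filter fun u => ∀ j, 1 ≤ j → j ≤ m → M.evalFrom q (u.take j) ∉ M.accept

lemma mem_avoidF {M : DFA A Q} {q : Q} {m : ℕ} {u : List A} :
    u ∈ avoidF M q m ↔ u.length = m ∧
      ∀ j, 1 ≤ j → j ≤ m → M.evalFrom q (u.take j) ∉ M.accept := by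
  simp [avoidF, Finset.mem_filter, mem_allWords]

lemma card_avoidF_D_le (M : DFA A Q) {D : ℕ}
    (hD : ∀ q : Q, ∃ e : List A, e.length = D ∧
      ∃ j, 1 ≤ j ∧ j ≤ D ∧ M.evalFrom q (e.take j) ∈ M.accept) (q : Q) :
    (avoidF M q D).card ≤ Fintype.card A ^ D - 1 := by
  obtain ⟨e, he, j, hj1, hjD, hacc⟩ := hD q
  have heA : e ∈ allWords A D := mem_allWords.2 he
  have hne : e ∉ avoidF M q D := fun h => (mem_avoidF.1 h).2 j hj1 hjD hacc
  have hsub : avoidF M q D ⊆ (allWords A D).erase e := by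
    intro u hu
    refine Finset.mem_erase.2 ⟨fun h => hne (h ▸ hu), mem_allWords.2 (mem_avoidF.1 hu).1⟩
  calc (avoidF M q D).card ≤ ((allWords A D).erase e).card := Finset.card_le_card hsub
    _ = Fintype.card A ^ D - 1 := by rw [Finset.card_erase_of_mem heA, card_allWords]

lemma card_avoidF_le (M : DFA A Q) {D : ℕ}
    (hD : ∀ q : Q, ∃ e : List A, e.length = D ∧
      ∃ j, 1 ≤ j ∧ j ≤ D ∧ M.evalFrom q (e.take j) ∈ M.accept) :
    ∀ (k : ℕ) (q : Q), (avoidF M q (k * D)).card ≤ (Fintype.card A ^ D - 1) ^ k := by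
  intro k
  induction k with
  | zero =>
      intro q
      have hsub : avoidF M q (0 * D) ⊆ allWords A (0 * D) := fun u hu =>
        mem_allWords.2 (mem_avoidF.1 hu).1
      simpa [card_allWords] using Finset.card_le_card hsub
  | succ k ih =>
      intro q
      have hsplit : (k + 1) * D = D + k * D := by ring
      have key : (avoidF M q ((k + 1) * D)).card ≤
          (Fintype.card A ^ D - 1) ^ k *
            ((avoidF M q ((k + 1) * D)).image (List.take D)).card := by
        apply Finset.card_le_mul_card_image
        intro u1 _
        -- fiber over u1 injects into avoidF M (M.evalFrom q u1) (k*D)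
        have : ((avoidF M q ((k + 1) * D)).filter fun u => u.take D = u1).card ≤
            (avoidF M (M.evalFrom q u1) (k * D)).card := by
          apply Finset.card_le_card_of_injOn (fun u => u.drop D)
          · intro u hu
            obtain ⟨hu1, hu2⟩ := Finset.mem_filter.1 hu
            obtain ⟨hlen, havoid⟩ := mem_avoidF.1 hu1
            refine mem_avoidF.2 ⟨by simp [hlen, hsplit], ?_⟩
            intro j hj1 hjk
            have htake : u.take (D + j) = u1 ++ (u.drop D).take j := by
              rw [List.take_add, hu2]
            have h1 : 1 ≤ D + j := by omega
            have h2 : D + j ≤ (k + 1) * D := by omega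
            have := havoid (D + j) h1 h2
            rwa [htake, evalFrom_append] at this
          · intro u hu v hv huv
            obtain ⟨-, hu2⟩ := Finset.mem_filter.1 hu
            obtain ⟨-, hv2⟩ := Finset.mem_filter.1 hv
            have huv' : u.drop D = v.drop D := huv
            calc u = u.take D ++ u.drop D := (List.take_append_drop _ _).symm
              _ = v.take D ++ v.drop D := by rw [hu2, hv2, huv']
              _ = v := List.take_append_drop _ _
        exact this.trans (ih (M.evalFrom q u1))
      have himg : ((avoidF M q ((k + 1) * D)).image (List.take D)) ⊆ avoidF M q D := by
        intro u1 hu1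
        obtain ⟨u, hu, rfl⟩ := Finset.mem_image.1 hu1
        obtain ⟨hlen, havoid⟩ := mem_avoidF.1 hu
        refine mem_avoidF.2 ⟨?_, ?_⟩
        · rw [List.length_take, hlen]
          have : D ≤ (k + 1) * D := by nlinarith
          omega
        · intro j hj1 hjD
          have : (u.take D).take j = u.take j := by
            rw [List.take_take, Nat.min_eq_left hjD]
          rw [this]
          exact havoid j hj1 (by nlinarith)
      calc (avoidF M q ((k + 1) * D)).card
          ≤ (Fintype.card A ^ D - 1) ^ k *
              ((avoidF M q ((k + 1) * D)).image (List.take D)).card := key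
        _ ≤ (Fintype.card A ^ D - 1) ^ k * (Fintype.card A ^ D - 1) :=
            Nat.mul_le_mul_left _ ((Finset.card_le_card himg).trans (card_avoidF_D_le M hD q))
        _ = (Fintype.card A ^ D - 1) ^ (k + 1) := by rw [pow_succ]

lemma window_inj {L t1 t2 j1 j2 : ℕ} (h1 : 1 ≤ j1) (h2 : j1 ≤ L) (h3 : 1 ≤ j2) (h4 : j2 ≤ L)
    (he : t1 * L + j1 = t2 * L + j2) : t1 = t2 := by
  rcases Nat.lt_trichotomy t1 t2 with h | h | h
  · have h5 := Nat.mul_le_mul_right L h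
    rw [Nat.succ_mul] at h5
    omega
  · exact h
  · have h5 := Nat.mul_le_mul_right L h
    rw [Nat.succ_mul] at h5
    omega

lemma lt_div_succ_mul (n L : ℕ) (h : 0 < L) : n < (n / L + 1) * L := by
  have h1 := Nat.div_add_mod n L
  have h2 := Nat.mod_lt n h
  have e : (n / L + 1) * L = L * (n / L) + L := by ring
  omega

lemma pref_length (x : ℕ → A) (n : ℕ) : (pref x n).length = n := by simp [pref]

end SelAux

open SelAux in
/-- if `x` is normal, `𝒜` is a trim group automaton (with at least one
final state) accepting `L`, and the run of `x` visits final states infinitely often,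
then the set of selected indices `{i ≥ 1 : x_1⋯x_i ∈ L}` is infinite and has positive
lower density; in particular `x ⊓ L` is an infinite sequence. -/
theorem selected_indices_positive_density {A Q : Type*} [Fintype A] [Fintype Q]
    (x : ℕ → A) (hx : IsNormal x) (M : DFA A Q)
    (hG : ∀ a : A, Function.Bijective (fun q => M.step q a))
    (hF : M.accept.Nonempty)
    (htrim : ∀ q : Q, (∃ u : List A, M.evalFrom M.start u = q) ∧
      ∃ v : List A, M.evalFrom q v ∈ M.accept)
    (hinf : ∀ N : ℕ, ∃ n ≥ N, M.evalFrom M.start (pref x n) ∈ M.accept) :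
    {i : ℕ | 0 < i ∧ M.evalFrom M.start (pref x i) ∈ M.accept}.Infinite ∧
    0 < Filter.liminf
      (fun n : ℕ =>
        ({i : ℕ | i ≤ n ∧ 0 < i ∧ M.evalFrom M.start (pref x i) ∈ M.accept}.ncard : ℝ)
          / n)
      atTop := by
  classical
  constructor
  · -- infiniteness from hinf
    intro hfin
    obtain ⟨m, hm⟩ := hfin.bddAbove
    obtain ⟨n, hn1, hn2⟩ := hinf (m + 1)
    have hmem : n ∈ {i : ℕ | 0 < i ∧ M.evalFrom M.start (pref x i) ∈ M.accept} :=
      ⟨by omega, hn2⟩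
    exact absurd (hm hmem) (by omega)
  · -- positive lower density
    -- a nonempty word leading to acceptance from each state
    have hg : ∀ q : Q, ∃ v : List A, v ≠ [] ∧ M.evalFrom q v ∈ M.accept := by
      intro q
      obtain ⟨v, hv⟩ := (htrim q).2
      rcases eq_or_ne v [] with rfl | hne
      · obtain ⟨v', hv'⟩ := (htrim (M.step q (x 0))).2
        refine ⟨x 0 :: v', by simp, ?_⟩
        have : (x 0 :: v') = [x 0] ++ v' := rfl
        rw [this, evalFrom_append]
        simpa [DFA.evalFrom] using hv'
      · exact ⟨v, hne, hv⟩
    choose g hg1 hg2 using hg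
    set D : ℕ := (Finset.univ.sup fun q : Q => (g q).length) + 1 with hDdef
    have hgD : ∀ q : Q, (g q).length ≤ D := by
      intro q
      rw [hDdef]
      exact le_trans (Finset.le_sup (f := fun q : Q => (g q).length) (Finset.mem_univ q))
        (Nat.le_succ _)
    have hD1 : 1 ≤ D := Nat.succ_le_succ (Nat.zero_le _)
    have hD : ∀ q : Q, ∃ e : List A, e.length = D ∧
        ∃ j, 1 ≤ j ∧ j ≤ D ∧ M.evalFrom q (e.take j) ∈ M.accept := by
      intro q
      refine ⟨g q ++ List.replicate (D - (g q).length) (x 0), ?_, (g q).length,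
        List.length_pos_iff.2 (hg1 q), hgD q, ?_⟩
      · rw [List.length_append, List.length_replicate]
        have := hgD q
        omega
      · rw [List.take_left]
        exact hg2 q
    set cA := Fintype.card A with hcAdef
    set cQ := Fintype.card Q with hcQdef
    have hcA : 1 ≤ cA := Fintype.card_pos_iff.2 ⟨x 0⟩
    have hPpos : (0 : ℝ) < (cA : ℝ) ^ D := by positivity
    set ρ : ℝ := ((cA ^ D - 1 : ℕ) : ℝ) / ((cA : ℝ) ^ D) with hρdef
    have hρ0 : 0 ≤ ρ := by positivity
    have hρ1 : ρ < 1 := by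
      rw [hρdef, div_lt_one hPpos]
      have h1 : (cA ^ D - 1 : ℕ) < cA ^ D := Nat.sub_lt (pow_pos hcA D) one_pos
      exact_mod_cast h1
    have htend : Tendsto (fun k : ℕ => (k : ℝ) * ρ ^ k) atTop (nhds 0) := by
      have hsum := summable_pow_mul_geometric_of_norm_lt_one (R := ℝ) 1
        (by rwa [Real.norm_eq_abs, abs_of_nonneg hρ0])
      simpa using hsum.tendsto_atTop_zero
    have hsmall : ∀ᶠ k : ℕ in atTop, (k : ℝ) * ρ ^ k < 1 / (2 * D * (cQ + 1)) :=
      htend.eventually (gt_mem_nhds (by positivity))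
    obtain ⟨k, hk1, hkρ⟩ := ((eventually_ge_atTop 1).and hsmall).exists
    set ℓ : ℕ := k * D with hℓdef
    have hℓ1 : 1 ≤ ℓ := Nat.one_le_iff_ne_zero.2 (by positivity)
    set badF : Finset (List A) := Finset.univ.biUnion (fun q : Q => avoidF M q ℓ) with hbaddef
    have hbadlen : ∀ u ∈ badF, u.length = ℓ := by
      intro u hu
      obtain ⟨q, -, hq⟩ := Finset.mem_biUnion.1 hu
      exact (mem_avoidF.1 hq).1
    have hbadcard : badF.card ≤ cQ * (cA ^ D - 1) ^ k := by
      refine Finset.card_biUnion_le.trans ?_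
      calc ∑ q : Q, (avoidF M q ℓ).card ≤ ∑ _q : Q, (cA ^ D - 1) ^ k :=
            Finset.sum_le_sum fun q _ => card_avoidF_le M hD k q
        _ = cQ * (cA ^ D - 1) ^ k := by rw [Finset.sum_const, Finset.card_univ, smul_eq_mul]
    set Sfin : ℕ → Finset ℕ := fun n => (Finset.range (n + 1)).filter
      (fun i => 0 < i ∧ M.evalFrom M.start (pref x i) ∈ M.accept) with hSfindef
    have hSeq : ∀ n : ℕ,
        ({i : ℕ | i ≤ n ∧ 0 < i ∧ M.evalFrom M.start (pref x i) ∈ M.accept}.ncard : ℝ)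
          = ((Sfin n).card : ℝ) := by
      intro n
      have hset : {i : ℕ | i ≤ n ∧ 0 < i ∧ M.evalFrom M.start (pref x i) ∈ M.accept}
          = ↑(Sfin n) := by
        ext i
        simp [hSfindef, Nat.lt_succ_iff, and_assoc]
      rw [hset, Set.ncard_coe_finset]
    -- the key counting inequality
    have hstar : ∀ n : ℕ, n / ℓ ≤ (Sfin n).card + ∑ u ∈ badF, occ (pref x n) u := by
      intro n
      set K := n / ℓ with hK
      have hKn : K * ℓ ≤ n := Nat.div_mul_le_self n ℓ
      set P : ℕ → Prop := fun t => ∃ j, 1 ≤ j ∧ j ≤ ℓ ∧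
        M.evalFrom M.start (pref x (t * ℓ + j)) ∈ M.accept with hPdef
    -- every window ending ≤ n
      have hwin : ∀ t j, t < K → j ≤ ℓ → t * ℓ + j ≤ n := by
        intro t j ht hj
        have h5 := Nat.mul_le_mul_right ℓ ht
        rw [Nat.succ_mul] at h5
        omega
      have hsplitK : ((Finset.range K).filter P).card
          + ((Finset.range K).filter (fun t => ¬ P t)).card = K := by
        rw [Finset.card_filter_add_card_filter_not, Finset.card_range]
      have hgood : ((Finset.range K).filter P).card ≤ (Sfin n).card := by
        apply Finset.card_le_card_of_injOn
          (fun t => t * ℓ + (if h : P t then h.choose else 0))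
        · intro t ht
          obtain ⟨htK, hPt⟩ := Finset.mem_filter.1 ht
          rw [Finset.mem_range] at htK
          beta_reduce
          rw [dif_pos hPt]
          obtain ⟨hj1, hjℓ, hacc⟩ := hPt.choose_spec
          refine Finset.mem_filter.2 ⟨Finset.mem_range.2 ?_, by omega, hacc⟩
          have := hwin t _ htK hjℓ
          omega
        · intro t1 h1 t2 h2 heq
          simp only [Finset.coe_filter, Set.mem_setOf_eq, Finset.mem_range] at h1 h2
          have heq' : t1 * ℓ + (if h : P t1 then h.choose else 0)
              = t2 * ℓ + (if h : P t2 then h.choose else 0) := heq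
          rw [dif_pos h1.2, dif_pos h2.2] at heq'
          obtain ⟨ha1, ha2, -⟩ := h1.2.choose_spec
          obtain ⟨hb1, hb2, -⟩ := h2.2.choose_spec
          exact window_inj ha1 ha2 hb1 hb2 heq'
      have hbadB : ((Finset.range K).filter (fun t => ¬ P t)).card
          ≤ ∑ u ∈ badF, occ (pref x n) u := by
        set Bset := (Finset.range K).filter (fun t => ¬ P t) with hBdef
        have hmapsto : ∀ t ∈ Bset, word x (t * ℓ) ℓ ∈ badF := by
          intro t ht
          obtain ⟨-, hPt⟩ := Finset.mem_filter.1 ht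
          refine Finset.mem_biUnion.2 ⟨M.evalFrom M.start (pref x (t * ℓ)), Finset.mem_univ _,
            mem_avoidF.2 ⟨word_length .., ?_⟩⟩
          intro j hj1 hjℓ
          rw [word_take _ _ _ _ hjℓ, ← state_add]
          intro hacc
          exact hPt ⟨j, hj1, hjℓ, hacc⟩
        rw [Finset.card_eq_sum_card_fiberwise hmapsto]
        apply Finset.sum_le_sum
        intro u hu
        have hlenu : u.length = ℓ := hbadlen u hu
        set T := Bset.filter (fun t => word x (t * ℓ) ℓ = u) with hTdef
        have hinjT : Set.InjOn (· * ℓ) ↑T := fun a _ b _ h =>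
          Nat.eq_of_mul_eq_mul_right (by omega) h
        have hcardT : (T.image (· * ℓ)).card = T.card := Finset.card_image_of_injOn hinjT
        rw [occ, ← hcardT, ← Set.ncard_coe_finset]
        apply Set.ncard_le_ncard
        · intro i hi
          simp only [Finset.coe_image, Set.mem_image, Finset.mem_coe] at hi
          obtain ⟨t, ht, rfl⟩ := hi
          obtain ⟨htB, htu⟩ := Finset.mem_filter.1 ht
          obtain ⟨htK, -⟩ := Finset.mem_filter.1 htB
          rw [Finset.mem_range] at htK
          have hle : t * ℓ + ℓ ≤ n := hwin t ℓ htK le_rfl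
          constructor
          · rw [hlenu, pref_length]
            exact hle
          · rw [hlenu, pref_drop_take _ _ _ _ hle]
            exact htu
        · apply (Set.finite_Iic n).subset
          intro i hi
          have h1 := hi.1
          rw [pref_length] at h1
          exact Set.mem_Iic.2 (by omega)
      omega
    -- analysis
    set φ : ℕ → ℝ := fun n => ∑ u ∈ badF, (occ (pref x n) u : ℝ) / n with hφdef
    set Lv : ℝ := (badF.card : ℝ) * ((cA : ℝ) ^ ℓ)⁻¹ with hLvdef
    have hφlim : Tendsto φ atTop (nhds Lv) := by
      have h1 : Tendsto φ atTop (nhds (∑ _u ∈ badF, ((cA : ℝ) ^ ℓ)⁻¹)) := by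
        apply tendsto_finset_sum
        intro u hu
        have h2 := hx u
        rwa [hbadlen u hu] at h2
      rwa [Finset.sum_const, nsmul_eq_mul] at h1
    have hLρ : Lv ≤ (cQ : ℝ) * ρ ^ k := by
      have hcard' : (badF.card : ℝ) ≤ (cQ : ℝ) * ((cA ^ D - 1 : ℕ) : ℝ) ^ k := by
        exact_mod_cast hbadcard
      have hinv : (0 : ℝ) ≤ ((cA : ℝ) ^ ℓ)⁻¹ := by positivity
      calc Lv ≤ ((cQ : ℝ) * ((cA ^ D - 1 : ℕ) : ℝ) ^ k) * ((cA : ℝ) ^ ℓ)⁻¹ :=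
            mul_le_mul_of_nonneg_right hcard' hinv
        _ = (cQ : ℝ) * ρ ^ k := by
            rw [hρdef, div_pow, ← pow_mul, show D * k = ℓ by rw [hℓdef]; ring,
              div_eq_mul_inv, mul_assoc]
    have hℓcast : ((ℓ : ℕ) : ℝ) = (k : ℝ) * (D : ℝ) := by rw [hℓdef]; push_cast; ring
    have hℓRpos : (0 : ℝ) < (ℓ : ℝ) := by
      rw [hℓcast]
      have h1 : (1 : ℝ) ≤ (k : ℝ) := by exact_mod_cast hk1
      have h2 : (1 : ℝ) ≤ (D : ℝ) := by exact_mod_cast hD1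
      nlinarith
    have hLvlt : Lv < 1 / (ℓ : ℝ) := by
      have h1 : ((k : ℝ) * ρ ^ k) * (2 * (D : ℝ) * ((cQ : ℝ) + 1)) < 1 := by
        rw [← lt_div_iff₀ (by positivity)]
        exact_mod_cast hkρ
      have hkr0 : (0 : ℝ) ≤ (k : ℝ) * ρ ^ k := by positivity
      have ha0 : (0 : ℝ) ≤ (cQ : ℝ) := by positivity
      have hd1 : (1 : ℝ) ≤ (D : ℝ) := by exact_mod_cast hD1
      have hda : (cQ : ℝ) * (D : ℝ) ≤ 2 * (D : ℝ) * ((cQ : ℝ) + 1) := by nlinarith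
      have hgoal : ((cQ : ℝ) * ρ ^ k) * ((k : ℝ) * (D : ℝ)) < 1 := by
        calc ((cQ : ℝ) * ρ ^ k) * ((k : ℝ) * (D : ℝ))
            = ((k : ℝ) * ρ ^ k) * ((cQ : ℝ) * (D : ℝ)) := by ring
          _ ≤ ((k : ℝ) * ρ ^ k) * (2 * (D : ℝ) * ((cQ : ℝ) + 1)) :=
              mul_le_mul_of_nonneg_left hda hkr0
          _ < 1 := h1
      have h2 : (cQ : ℝ) * ρ ^ k < 1 / (ℓ : ℝ) := by
        rw [lt_div_iff₀ hℓRpos, hℓcast]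
        exact hgoal
      exact lt_of_le_of_lt hLρ h2
    set ε : ℝ := (1 / (ℓ : ℝ) - Lv) / 3 with hεdef
    have hε : 0 < ε := by rw [hεdef]; linarith
    have hev1 : ∀ᶠ n in atTop, φ n < Lv + ε :=
      hφlim.eventually (gt_mem_nhds (by linarith))
    have hev2 : ∀ᶠ n : ℕ in atTop, 1 / (n : ℝ) < ε :=
      tendsto_one_div_atTop_nhds_zero_nat.eventually (gt_mem_nhds hε)
    have hevmain : ∀ᶠ n : ℕ in atTop, ε ≤
        ({i : ℕ | i ≤ n ∧ 0 < i ∧ M.evalFrom M.start (pref x i) ∈ M.accept}.ncard : ℝ)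
          / n := by
      filter_upwards [hev1, hev2, eventually_ge_atTop 1] with n h1 h2 hn
      have hn0 : (0 : ℝ) < (n : ℝ) := by exact_mod_cast hn
      have hst : ((n / ℓ : ℕ) : ℝ) ≤ ((Sfin n).card : ℝ)
          + ∑ u ∈ badF, (occ (pref x n) u : ℝ) := by exact_mod_cast hstar n
      have hsumdiv : (∑ u ∈ badF, (occ (pref x n) u : ℝ)) / (n : ℝ) = φ n := by
        rw [hφdef, Finset.sum_div]
      have hdiv : ((n / ℓ : ℕ) : ℝ) / (n : ℝ) ≤ ((Sfin n).card : ℝ) / (n : ℝ) + φ n := by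
        rw [← hsumdiv, ← add_div]
        exact (div_le_div_iff_of_pos_right hn0).2 hst
      have hnlt : (n : ℝ) < (((n / ℓ : ℕ) : ℝ) + 1) * (ℓ : ℝ) := by
        exact_mod_cast lt_div_succ_mul n ℓ (by omega)
      have hKlow : 1 / (ℓ : ℝ) - 1 / (n : ℝ) ≤ ((n / ℓ : ℕ) : ℝ) / (n : ℝ) := by
        have h3 : (n : ℝ) / (ℓ : ℝ) - 1 ≤ ((n / ℓ : ℕ) : ℝ) := by
          have h6 : (n : ℝ) / (ℓ : ℝ) < ((n / ℓ : ℕ) : ℝ) + 1 := (div_lt_iff₀ hℓRpos).2 hnlt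
          linarith
        have h4 : ((n : ℝ) / (ℓ : ℝ) - 1) / (n : ℝ) ≤ ((n / ℓ : ℕ) : ℝ) / (n : ℝ) :=
          (div_le_div_iff_of_pos_right hn0).2 h3
        have h5 : ((n : ℝ) / (ℓ : ℝ) - 1) / (n : ℝ) = 1 / (ℓ : ℝ) - 1 / (n : ℝ) := by
          field_simp
        rw [h5] at h4
        exact h4
      rw [hSeq n]
      have hεeq : 1 / (ℓ : ℝ) - Lv = 3 * ε := by rw [hεdef]; ring
      linarith
    have hbdd : ∀ᶠ n : ℕ in atTop,
        ({i : ℕ | i ≤ n ∧ 0 < i ∧ M.evalFrom M.start (pref x i) ∈ M.accept}.ncard : ℝ)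
          / n ≤ 2 := by
      filter_upwards [eventually_ge_atTop 1] with n hn
      have hn0 : (0 : ℝ) < (n : ℝ) := by exact_mod_cast hn
      rw [hSeq n, div_le_iff₀ hn0]
      have hc : (Sfin n).card ≤ n + 1 := by
        calc (Sfin n).card ≤ (Finset.range (n + 1)).card := Finset.card_filter_le _ _
          _ = n + 1 := Finset.card_range _
      have hc' : ((Sfin n).card : ℝ) ≤ (n : ℝ) + 1 := by exact_mod_cast hc
      have h1 : (1 : ℝ) ≤ (n : ℝ) := by exact_mod_cast hn
      nlinarith
    have hcb : IsCoboundedUnder (· ≥ ·) atTop (fun n : ℕ =>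
        ({i : ℕ | i ≤ n ∧ 0 < i ∧ M.evalFrom M.start (pref x i) ∈ M.accept}.ncard : ℝ)
          / n) :=
      Filter.isCoboundedUnder_ge_of_eventually_le atTop hbdd
    exact lt_of_lt_of_le hε (Filter.le_liminf_of_le hcb hevmain)
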